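/- arXiv:2407.10572 — 2 statements merged into one kernel-verified Lean document; each statement's English description precedes it below -/
import Mathlib

section
/- Let G be a finite group and χ an irreducible complex character of G. Then χ is linear (i.e., χ(1) = 1) if and only if [Z(χ), G] = G', where Z(χ) = {g ∈ G : |χ(g)| = χ(1)} is the center of χ and G' is the commutator subgroup. -/
open scoped Classical

def IsIrrChar (G : Type) [Group G] (χ : G → ℂ) : Prop :=
  ∃ V : FDRep ℂ G, CategoryTheory.Simple V ∧ χ = fun g => V.character g

def IsNlChar (G : Type) [Group G] (χ : G → ℂ) : Prop := IsIrrChar G χ ∧ χ 1 ≠ 1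

def charCenter (G : Type) [Group G] (χ : G → ℂ) : Set G :=
  {g | ‖χ g‖ = ‖χ 1‖}

def charKer (G : Type) [Group G] (χ : G → ℂ) : Set G := {g | χ g = χ 1}

open scoped commutatorElement in
def commSub (G : Type) [Group G] (S : Set G) : Subgroup G :=
  Subgroup.normalClosure {x | ∃ z ∈ S, ∃ g : G, x = ⁅z, g⁆}

def cdSet (G : Type) [Group G] : Set ℂ := {d | ∃ χ, IsIrrChar G χ ∧ χ 1 = d}

def IsGVZ (G : Type) [Group G] : Prop :=
  ∀ χ, IsIrrChar G χ → ∀ g, g ∉ charCenter G χ → χ g = 0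

def charCenterSub (G : Type) [Group G] (χ : G → ℂ) : Subgroup G :=
  Subgroup.normalClosure (charCenter G χ)

noncomputable def charInner (G : Type) [Group G] (φ ψ : G → ℂ) : ℂ :=
  (Nat.card G : ℂ)⁻¹ * ∑ᶠ g : G, φ g * star (ψ g)

noncomputable def inducedChar {G : Type} [Group G] (H : Subgroup G) (lam : H → ℂ) : G → ℂ :=
  fun g => (Nat.card H : ℂ)⁻¹ *
    ∑ᶠ x : G, if h : x * g * x⁻¹ ∈ H then lam ⟨x * g * x⁻¹, h⟩ else 0


instance (G : Type) [Group G] (S : Set G) : (commSub G S).Normal :=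
  Subgroup.normalClosure_normal

instance (G : Type) [Group G] (χ : G → ℂ) : (charCenterSub G χ).Normal :=
  Subgroup.normalClosure_normal

open scoped commutatorElement

section Aux
open Polynomial

lemma aux_multiset_eq_one (s : Multiset ℝ) (h1 : ∀ x ∈ s, x ≤ 1) (h2 : (s.card : ℝ) ≤ s.sum) :
    ∀ x ∈ s, x = 1 := by
  induction s using Multiset.induction with
  | empty => simp
  | cons a t ih =>
    have hta : a ≤ 1 := h1 a (Multiset.mem_cons_self a t)
    have ht1 : ∀ x ∈ t, x ≤ 1 := fun x hx => h1 x (Multiset.mem_cons_of_mem hx)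
    have hts : t.sum ≤ (t.card : ℝ) := by
      simpa using Multiset.sum_le_card_nsmul t 1 ht1
    simp only [Multiset.sum_cons, Multiset.card_cons] at h2
    push_cast at h2
    have ht2 : (t.card : ℝ) ≤ t.sum := by linarith
    intro x hx
    rcases Multiset.mem_cons.mp hx with rfl | hx
    · linarith
    · exact ih ht1 ht2 x hx

lemma aux_complex_eq_one (z : ℂ) (h1 : z.re = 1) (h2 : ‖z‖ ≤ 1) : z = 1 := by
  have h3 : Complex.normSq z ≤ 1 := by
    have := Complex.sq_norm z
    nlinarith [norm_nonneg z]
  have h4 : z.im = 0 := by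
    have := Complex.normSq_apply z
    nlinarith
  exact Complex.ext (by simp [h1]) (by simp [h4])

/-- Triangle equality: if all elements of a complex multiset have absolute value 1 and the
absolute value of the sum equals the cardinality, then all elements are equal. -/
lemma aux_sum_mul (s : Multiset ℂ) (c : ℂ) : (s.map (fun x => x * c)).sum = s.sum * c := by
  induction s using Multiset.induction with
  | empty => simp
  | cons a t ih => simp [ih, add_mul]

lemma aux_multiset_const (s : Multiset ℂ) (h1 : ∀ x ∈ s, ‖x‖ = 1)
    (h2 : ‖s.sum‖ = s.card) (hs : s ≠ 0) :
    ∀ x ∈ s, ∀ y ∈ s, x = y := by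
  have hcard : 0 < s.card := Multiset.card_pos.mpr hs
  set S := s.sum with hS
  have hd : (0:ℝ) < s.card := by exact_mod_cast hcard
  have hSne : S ≠ 0 := by
    intro h
    rw [h] at h2; simp at h2; have : (s.card : ℝ) ≠ 0 := by exact_mod_cast hcard.ne'
    exact this h2.symm
  set u : ℂ := (starRingEnd ℂ) S / (s.card : ℂ) with hu
  have habsu : ‖u‖ = 1 := by
    rw [hu, norm_div, Complex.norm_conj, h2]
    simp [hd.ne']
  -- each (x*u).re ≤ 1
  have hle : ∀ x ∈ s, (x * u).re ≤ 1 := by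
    intro x hx
    calc (x * u).re ≤ ‖x * u‖ := Complex.re_le_norm _
    _ = 1 := by rw [norm_mul, h1 x hx, habsu, one_mul]
  -- sum of re equals card
  have hsum : (s.map (fun x => (x * u).re)).sum = (s.card : ℝ) := by
    have e1 : (s.map (fun x => (x * u).re)).sum = ((s.map (fun x => x * u)).sum).re := by
      rw [show (Multiset.map (fun x => (x * u).re) s) =
        (Multiset.map (fun x => x * u) s).map Complex.reAddGroupHom from by
          rw [Multiset.map_map]; rfl,
        ← map_multiset_sum]
      rfl
    have e2 : (s.map (fun x => x * u)).sum = S * u := by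
      rw [aux_sum_mul]
    have e3 : S * u = ((s.card : ℝ) : ℂ) := by
      rw [hu, mul_div_assoc', Complex.mul_conj, Complex.normSq_eq_norm_sq, h2]
      push_cast
      rw [sq, mul_div_assoc, div_self (show ((s.card : ℕ) : ℂ) ≠ 0 from by exact_mod_cast hcard.ne'), mul_one]
    rw [e1, e2, e3, Complex.ofReal_re]
  have key : ∀ x ∈ s, (x * u).re = 1 := by
    have := aux_multiset_eq_one (s.map (fun x => (x * u).re))
      (by intro x hx; obtain ⟨y, hy, rfl⟩ := Multiset.mem_map.mp hx; exact hle y hy)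
      (by rw [hsum]; simp)
    intro x hx
    exact this _ (Multiset.mem_map_of_mem _ hx)
  intro x hx y hy
  have hx1 : x * u = 1 := aux_complex_eq_one _ (key x hx) (by rw [norm_mul, h1 x hx, habsu]; norm_num)
  have hy1 : y * u = 1 := aux_complex_eq_one _ (key y hy) (by rw [norm_mul, h1 y hy, habsu]; norm_num)
  have hune : u ≠ 0 := by intro h; rw [h, mul_zero] at hx1; exact one_ne_zero hx1.symm
  exact mul_right_cancel₀ hune (hx1.trans hy1.symm)

lemma aux_real_eq_one (a : ℝ) (ha : 0 ≤ a) (n : ℕ) (hn : n ≠ 0) (h : a ^ n = 1) : a = 1 := by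
  rcases lt_trichotomy a 1 with hlt | heq | hgt
  · exact absurd h (by have := pow_lt_one₀ ha hlt hn; linarith)
  · exact heq
  · exact absurd h (by have := one_lt_pow₀ hgt hn; linarith)

lemma aux_abs_eq_one (x : ℂ) (n : ℕ) (hn : n ≠ 0) (h : x ^ n = 1) : ‖x‖ = 1 := by
  apply aux_real_eq_one _ (norm_nonneg x) n hn
  rw [← norm_pow, h, norm_one]

-- charpoly eval = det
lemma aux_eval_charpoly {W : Type} [AddCommGroup W] [Module ℂ W] [FiniteDimensional ℂ W]
    (f : Module.End ℂ W) (μ : ℂ) :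
    Polynomial.eval μ (LinearMap.charpoly f) =
      LinearMap.det (μ • (1 : Module.End ℂ W) - f) := by
  classical
  let b := Module.finBasis ℂ W
  let A := LinearMap.toMatrix b b f
  have hA : A.charpoly = LinearMap.charpoly f := LinearMap.charpoly_toMatrix f b
  rw [← hA, Matrix.charpoly, ← Polynomial.coe_evalRingHom, RingHom.map_det]
  have hmap : (Matrix.charmatrix A).map (Polynomial.evalRingHom μ) = μ • 1 - A := by
    ext i j
    by_cases h : i = j
    · subst h
      simp [Matrix.charmatrix_apply_eq, Matrix.one_apply]
    · simp [Matrix.charmatrix_apply_ne _ _ _ h, Matrix.one_apply, h]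
  rw [show (Polynomial.evalRingHom μ).mapMatrix (Matrix.charmatrix A) =
    (Matrix.charmatrix A).map (Polynomial.evalRingHom μ) from rfl, hmap]
  rw [← LinearMap.det_toMatrix b]
  congr 1
  rw [map_sub, map_smul, show (1 : Module.End ℂ W) = LinearMap.id from rfl,
    LinearMap.toMatrix_id]

lemma aux_root_charpoly_pow {W : Type} [AddCommGroup W] [Module ℂ W] [FiniteDimensional ℂ W]
    (f : Module.End ℂ W) (n : ℕ) (hn : n ≠ 0) (hfn : f ^ n = 1)
    (μ : ℂ) (hμ : μ ∈ (LinearMap.charpoly f).roots) : μ ^ n = 1 := by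
  have hroot : Polynomial.eval μ (LinearMap.charpoly f) = 0 :=
    (Polynomial.isRoot_of_mem_roots hμ)
  have hdet : LinearMap.det (μ • (1 : Module.End ℂ W) - f) = 0 := by
    rw [← aux_eval_charpoly]; exact hroot
  have hker : ⊥ < LinearMap.ker (μ • (1 : Module.End ℂ W) - f) :=
    LinearMap.bot_lt_ker_of_det_eq_zero hdet
  -- not a unit
  have hnu : ¬ IsUnit ((algebraMap ℂ (Module.End ℂ W)) μ - f) := by
    rw [show (algebraMap ℂ (Module.End ℂ W)) μ = μ • 1 from Algebra.algebraMap_eq_smul_one μ]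
    rw [LinearMap.isUnit_iff_ker_eq_bot]
    exact fun h => (hker.ne' h).elim
  have hspec : μ ∈ spectrum ℂ f := spectrum.mem_iff.mpr hnu
  have heig : f.HasEigenvalue μ := Module.End.HasUnifEigenvalue.of_mem_spectrum hspec
  have hmin : (minpoly ℂ f).IsRoot μ := Module.End.isRoot_of_hasEigenvalue heig
  have hdvd : minpoly ℂ f ∣ X ^ n - 1 := by
    apply minpoly.dvd
    rw [map_sub, map_pow, aeval_X, map_one, hfn, sub_self]
  have : Polynomial.eval μ (X ^ n - 1 : ℂ[X]) = 0 := by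
    obtain ⟨q, hq⟩ := hdvd
    rw [hq, eval_mul, hmin, zero_mul]
  simpa [sub_eq_zero] using this

lemma aux_scalar_of_abs_trace {W : Type} [AddCommGroup W] [Module ℂ W] [FiniteDimensional ℂ W]
    (f : Module.End ℂ W) (n : ℕ) (hn : n ≠ 0) (hfn : f ^ n = 1)
    (habs : ‖LinearMap.trace ℂ W f‖ = Module.finrank ℂ W) :
    ∃ c : ℂ, f = c • (1 : Module.End ℂ W) := by
  classical
  set d := Module.finrank ℂ W with hd
  rcases Nat.eq_zero_or_pos d with hd0 | hdpos
  · have : Subsingleton W := by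
      rw [← Module.finrank_zero_iff (R := ℂ)]; omega
    exact ⟨1, by ext w; exact Subsingleton.elim _ _⟩
  -- trace = sum of roots of charpoly
  have htr : LinearMap.trace ℂ W f = (LinearMap.charpoly f).roots.sum := by
    let b := Module.finBasis ℂ W
    rw [LinearMap.trace_eq_matrix_trace ℂ b f,
      Matrix.trace_eq_sum_roots_charpoly, LinearMap.charpoly_toMatrix f b]
  have hcard : (LinearMap.charpoly f).roots.card = d := by
    rw [(Polynomial.splits_iff_card_roots).mp (IsAlgClosed.splits _),
      LinearMap.charpoly_natDegree]
  have habs1 : ∀ μ ∈ (LinearMap.charpoly f).roots, ‖μ‖ = 1 := by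
    intro μ hμ
    exact aux_abs_eq_one μ n hn (aux_root_charpoly_pow f n hn hfn μ hμ)
  have hconst : ∀ x ∈ (LinearMap.charpoly f).roots, ∀ y ∈ (LinearMap.charpoly f).roots, x = y := by
    apply aux_multiset_const _ habs1
    · rw [← htr, hcard]; exact habs
    · intro h
      rw [h] at hcard; simp at hcard; omega
  -- pick the common root
  obtain ⟨lam, hlam⟩ := Multiset.exists_mem_of_ne_zero (by
    intro h; rw [h] at hcard; simp at hcard; omega :
      (LinearMap.charpoly f).roots ≠ 0)
  -- minpoly analysis
  set p := minpoly ℂ f with hp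
  have hint : IsIntegral ℂ f := LinearMap.isIntegral f
  have hmonic : p.Monic := minpoly.monic hint
  have hdvd : p ∣ X ^ n - 1 := by
    apply minpoly.dvd
    rw [map_sub, map_pow, aeval_X, map_one, hfn, sub_self]
  have hXn : (X ^ n - 1 : ℂ[X]).Separable := by
    have := Polynomial.separable_X_pow_sub_C (1 : ℂ) (by exact_mod_cast hn) one_ne_zero
    simpa using this
  have hsqf : Squarefree p := (hXn.squarefree).squarefree_of_dvd hdvd
  have hproots : ∀ ν ∈ p.roots, ν = lam := by
    intro ν hν
    have hpr : ν ∈ (LinearMap.charpoly f).roots := by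
      rw [Polynomial.mem_roots'] at hν ⊢
      exact ⟨(LinearMap.charpoly_monic f).ne_zero,
        hν.2.dvd (LinearMap.minpoly_dvd_charpoly f)⟩
    exact hconst ν hpr lam hlam
  have hsplits : p.Splits := IsAlgClosed.splits p
  have hprod : p = ((p.roots).map (fun a => X - C a)).prod :=
    (hsplits.eq_prod_roots_of_monic hmonic)
  have hmapeq : (p.roots.map (fun a => X - C a)) =
      Multiset.replicate (Multiset.card p.roots) (X - C lam) := by
    rw [Multiset.eq_replicate]
    constructor
    · rw [Multiset.card_map]
    · intro q hq
      obtain ⟨ν, hν, rfl⟩ := Multiset.mem_map.mp hq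
      rw [hproots ν hν]
  have hform : p = (X - C lam) ^ Multiset.card p.roots :=
    hprod.trans (by rw [hmapeq, Multiset.prod_replicate])
  have hdeg : p.roots.card = p.natDegree :=
    (Polynomial.splits_iff_card_roots).mp hsplits
  have : Nontrivial W := by
    apply Module.nontrivial_of_finrank_pos (R := ℂ)
    omega
  have hdegpos : 0 < p.natDegree := minpoly.natDegree_pos hint
  have hcard1 : p.roots.card = 1 := by
    by_contra hne
    have h2 : 2 ≤ p.roots.card := by omega
    have : (X - C lam) * (X - C lam) ∣ p := by
      rw [hform, ← pow_two]
      exact pow_dvd_pow _ h2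
    exact (Polynomial.not_isUnit_X_sub_C lam) (hsqf _ this)
  have hpeq : p = X - C lam := by rw [hform, hcard1, pow_one]
  refine ⟨lam, ?_⟩
  have := minpoly.aeval ℂ f
  rw [← hp, hpeq, map_sub, aeval_X, aeval_C, sub_eq_zero] at this
  rw [this, Algebra.algebraMap_eq_smul_one]

end Aux

open CategoryTheory Polynomial

section AuxRep

variable {G : Type} [Group G]

/-- The kernel of the representation underlying `V` as a subgroup. -/
def repKer (V : FDRep ℂ G) : Subgroup G where
  carrier := {g | V.ρ g = 1}
  one_mem' := map_one V.ρ
  mul_mem' := by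
    intro a b ha hb
    simp only [Set.mem_setOf_eq, map_mul] at *
    rw [ha, hb, one_mul]
  inv_mem' := by
    intro a ha
    simp only [Set.mem_setOf_eq] at *
    have : V.ρ a⁻¹ * V.ρ a = 1 := by rw [← map_mul, inv_mul_cancel, map_one]
    rw [ha, mul_one] at this
    exact this

instance (V : FDRep ℂ G) : (repKer V).Normal := by
  constructor
  intro a ha g
  have ha' : V.ρ a = 1 := ha
  show V.ρ (g * a * g⁻¹) = 1
  rw [map_mul, map_mul, ha', mul_one, ← map_mul, mul_inv_cancel, map_one]

lemma aux_exists_scalar_of_comm (V : FDRep ℂ G) [Simple V] (g : G)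
    (hcomm : ∀ h : G, V.ρ g * V.ρ h = V.ρ h * V.ρ g) :
    ∃ c : ℂ, V.ρ g = c • (1 : Module.End ℂ V.V) := by
  let φ : V ⟶ V := Action.Hom.mk (FGModuleCat.ofHom (V.ρ g))
    (fun h => by
      ext v
      exact congrFun (congrArg (fun (m : Module.End ℂ V.V) => (m : V.V → V.V)) (hcomm h)) v)
  obtain ⟨c, hc⟩ := CategoryTheory.endomorphism_simple_eq_smul_id ℂ φ
  refine ⟨c, ?_⟩
  have := congrArg (fun f : V ⟶ V => f.hom.hom.hom) hc
  exact this.symm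

end AuxRep

theorem stmt0 (G : Type) [Group G] [Finite G] (χ : G → ℂ) (hχ : IsIrrChar G χ) :
    χ 1 = 1 ↔ commSub G (charCenter G χ) = commutator G := by
  classical
  obtain ⟨V, hV, rfl⟩ := hχ
  haveI := hV
  have hchar : ∀ g : G, V.character g = LinearMap.trace ℂ V.V (V.ρ g) := fun g => rfl
  have hχ1 : V.character 1 = ((Module.finrank ℂ V.V : ℕ) : ℂ) := FDRep.char_one V
  constructor
  · -- linear implies commSub = commutator
    intro h1
    have hd1 : Module.finrank ℂ V.V = 1 := by
      have : ((Module.finrank ℂ V.V : ℕ) : ℂ) = 1 := by rw [← hχ1]; exact h1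
      exact_mod_cast this
    haveI : Nontrivial V.V := Module.nontrivial_of_finrank_pos (R := ℂ) (by omega)
    have hone : (1 : Module.End ℂ V.V) ≠ 0 := by
      intro h
      obtain ⟨v, hv⟩ := exists_ne (0 : V.V)
      have : (1 : Module.End ℂ V.V) v = 0 := by rw [h]; rfl
      exact hv this
    have hEnd : Module.finrank ℂ (Module.End ℂ V.V) = 1 := by
      rw [Module.finrank_linearMap, hd1, mul_one]
    have hscal : ∀ f : Module.End ℂ V.V, ∃ c : ℂ, c • (1 : Module.End ℂ V.V) = f :=
      (finrank_eq_one_iff_of_nonzero' (1 : Module.End ℂ V.V) hone).mp hEnd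
    have htr1 : LinearMap.trace ℂ V.V (1 : Module.End ℂ V.V) = 1 := by
      rw [show (1 : Module.End ℂ V.V) = LinearMap.id from rfl, LinearMap.trace_id, hd1]
      norm_num
    have htrc : ∀ c : ℂ, LinearMap.trace ℂ V.V (c • (1 : Module.End ℂ V.V)) = c := by
      intro c
      rw [map_smul, htr1, smul_eq_mul, mul_one]
    have hmul : ∀ g h : G, V.character (g * h) = V.character g * V.character h := by
      intro g h
      obtain ⟨c₁, hc₁⟩ := hscal (V.ρ g)
      obtain ⟨c₂, hc₂⟩ := hscal (V.ρ h)
      rw [hchar, hchar, hchar, map_mul, ← hc₁, ← hc₂, smul_mul_assoc, mul_smul_comm, one_mul,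
        smul_smul, htrc, htrc, htrc]
    have hpow : ∀ (g : G) (k : ℕ), V.character (g ^ k) = (V.character g) ^ k := by
      intro g k
      induction k with
      | zero => simp only [pow_zero]; exact h1
      | succ k ih => rw [pow_succ, pow_succ, hmul, ih]
    have habs : ∀ g : G, ‖V.character g‖ = 1 := by
      intro g
      apply aux_abs_eq_one _ (orderOf g) (orderOf_pos g).ne'
      rw [← hpow, pow_orderOf_eq_one]
      exact h1
    have hcen : charCenter G (fun g => V.character g) = Set.univ := by
      ext g
      simp only [charCenter, Set.mem_setOf_eq, Set.mem_univ, iff_true]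
      rw [habs, habs]
    rw [commSub, hcen, commutator_eq_normalClosure]
    congr 1
    ext x
    constructor
    · rintro ⟨z, -, g, rfl⟩; exact ⟨z, g, rfl⟩
    · rintro ⟨z, g, rfl⟩; exact ⟨z, Set.mem_univ z, g, rfl⟩
  · -- commSub = commutator implies linear
    intro heq
    -- every element of the char center acts by a scalar, so commutators with it act trivially
    have hsub : {x | ∃ z ∈ charCenter G (fun g => V.character g), ∃ g : G, x = ⁅z, g⁆} ⊆
        (repKer V : Set G) := by
      rintro x ⟨z, hz, g, rfl⟩
      have habs : ‖V.character z‖ = (Module.finrank ℂ V.V : ℝ) := by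
        have := hz
        simp only [charCenter, Set.mem_setOf_eq] at this
        rw [this, hχ1]
        simp
      have hfn : (V.ρ z) ^ (orderOf z) = 1 := by
        rw [← map_pow, pow_orderOf_eq_one, map_one]
      obtain ⟨c, hc⟩ := aux_scalar_of_abs_trace (V.ρ z) (orderOf z) (orderOf_pos z).ne' hfn
        (by exact habs)
      have hcinv : c • V.ρ z⁻¹ = 1 := by
        have : V.ρ z⁻¹ * V.ρ z = 1 := by rw [← map_mul, inv_mul_cancel, map_one]
        rw [hc, mul_smul_comm, mul_one] at this
        exact this
      show V.ρ ⁅z, g⁆ = 1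
      show V.ρ (z * g * z⁻¹ * g⁻¹) = 1
      rw [map_mul, map_mul, map_mul, hc, smul_mul_assoc, smul_mul_assoc, smul_mul_assoc, one_mul]
      calc c • (V.ρ g * V.ρ z⁻¹ * V.ρ g⁻¹)
          = V.ρ g * (c • V.ρ z⁻¹) * V.ρ g⁻¹ := by
            rw [mul_smul_comm, smul_mul_assoc]
      _ = 1 := by rw [hcinv, mul_one, ← map_mul, mul_inv_cancel, map_one]
    have hK : commSub G (charCenter G (fun g => V.character g)) ≤ repKer V :=
      Subgroup.normalClosure_le_normal hsub
    have hcomm_le : commutator G ≤ repKer V := heq ▸ hK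
    have hcommρ : ∀ g h : G, V.ρ g * V.ρ h = V.ρ h * V.ρ g := by
      intro g h
      have hmem : ⁅g, h⁆ ∈ commutator G := by
        rw [commutator_def]
        exact Subgroup.commutator_mem_commutator (Subgroup.mem_top g) (Subgroup.mem_top h)
      have h1 : V.ρ ⁅g, h⁆ = 1 := hcomm_le hmem
      have h2 : g * h = ⁅g, h⁆ * (h * g) := by group
      have h3 : V.ρ (g * h) = V.ρ (h * g) := by
        rw [h2, map_mul, h1, one_mul]
      rw [← map_mul, ← map_mul, h3]
    have hscal : ∀ g : G, ∃ c : ℂ, V.ρ g = c • (1 : Module.End ℂ V.V) :=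
      fun g => aux_exists_scalar_of_comm V g (fun h => hcommρ g h)
    choose c hc using hscal
    -- nondegeneracy
    have hone : (1 : Module.End ℂ V.V) ≠ 0 := by
      intro h
      apply CategoryTheory.id_nonzero V
      ext v
      exact congrFun (congrArg (fun (m : Module.End ℂ V.V) => (m : V.V → V.V)) h) v
    have hcc : ∀ g : G, c g * c g⁻¹ = 1 := by
      intro g
      have h1 : V.ρ g * V.ρ g⁻¹ = 1 := by rw [← map_mul, mul_inv_cancel, map_one]
      rw [hc, hc, smul_mul_assoc, mul_smul_comm, one_mul, smul_smul] at h1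
      have : (c g * c g⁻¹) • (1 : Module.End ℂ V.V) = (1 : ℂ) • (1 : Module.End ℂ V.V) := by
        rw [h1, one_smul]
      exact smul_left_injective ℂ hone this
    set d := Module.finrank ℂ V.V with hdd
    have hchard : ∀ g : G, V.character g = c g * d := by
      intro g
      rw [hchar, hc, map_smul, smul_eq_mul]
      congr 1
      rw [show (1 : Module.End ℂ V.V) = LinearMap.id from rfl, LinearMap.trace_id]
    haveI : Fintype G := Fintype.ofFinite G
    haveI : Invertible ((Fintype.card G : ℂ)) :=
      invertibleOfNonzero (Nat.cast_ne_zero.mpr Fintype.card_ne_zero)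
    haveI : Fintype G := inferInstanceAs (Fintype G)
    haveI : Invertible ((Fintype.card G : ℂ)) :=
      invertibleOfNonzero (Nat.cast_ne_zero.mpr Fintype.card_ne_zero)
    have horth := FDRep.char_orthonormal (k := ℂ) (G := G) V V
    rw [if_pos ⟨Iso.refl V⟩] at horth
    have hsum : ∑ g : G, V.character g * V.character g⁻¹ =
        ((Fintype.card G : ℕ) : ℂ) * (d : ℂ) ^ 2 := by
      have hterm : ∀ g : G, V.character g * V.character g⁻¹ = (d:ℂ)^2 := by
        intro g
        rw [hchard, hchard, show c g * (d:ℂ) * (c g⁻¹ * (d:ℂ)) = (c g * c g⁻¹) * (d:ℂ)^2 from by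
          ring, hcc, one_mul]
      calc ∑ g : G, V.character g * V.character g⁻¹
          = ∑ _g : G, (d:ℂ)^2 := Finset.sum_congr rfl (fun g _ => hterm g)
        _ = ((Fintype.card G : ℕ) : ℂ) * (d:ℂ)^2 := by
            rw [Finset.sum_const, nsmul_eq_mul]
            simp [Finset.card_univ]
    rw [hsum, Nat.card_eq_fintype_card, ← mul_assoc, inv_mul_cancel₀ (Nat.cast_ne_zero.mpr Fintype.card_ne_zero), one_mul] at horth
    have hd2 : d ^ 2 = 1 := by exact_mod_cast horth
    have hd1 : d = 1 := by nlinarith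
    show V.character 1 = 1
    rw [hχ1]
    exact_mod_cast hd1
end

section
/- Let G be a finite group and χ an irreducible complex character of G. Then the center of the quotient group G/[Z(χ),G] equals Z(χ)/[Z(χ),G]. -/
open scoped Classical

namespace Stmt1Aux
open CategoryTheory Module
variable {G : Type} [Group G] [Finite G]


lemma pow_apply_eigen {V : Type} [AddCommGroup V] [Module ℂ V] (u : Module.End ℂ V)
    {μ : ℂ} {x : V} (hx : x ∈ u.eigenspace μ) (j : ℕ) : (u ^ j) x = μ ^ j • x := by
  induction j with
  | zero => simp
  | succ j ih =>
      rw [pow_succ, pow_succ, Module.End.mul_apply,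
        Module.End.mem_eigenspace_iff.mp hx, map_smul, ih, smul_smul, mul_comm]

lemma scalar_of_abs_char (V : FDRep ℂ G) (z : G)
    (hn : 0 < finrank ℂ V)
    (h : ‖V.character z‖ = (finrank ℂ V : ℝ)) :
    ∃ c : ℂ, ‖c‖ = 1 ∧ V.ρ z = c • LinearMap.id := by
  classical
  set u : Module.End ℂ V := V.ρ z with hu
  set k := orderOf z with hk
  have hk0 : k ≠ 0 := (orderOf_pos z).ne'
  have huk : u ^ k = 1 := by
    rw [hu, ← map_pow, pow_orderOf_eq_one, map_one]
  have hss : u.IsSemisimple := by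
    refine Module.End.isSemisimple_of_squarefree_aeval_eq_zero
      (p := Polynomial.X ^ k - Polynomial.C 1) ?_ ?_
    · exact (Polynomial.separable_X_pow_sub_C 1
        (by exact_mod_cast (Nat.cast_ne_zero (R := ℂ)).mpr hk0) one_ne_zero).squarefree
    · simp [huk]
  have hsup : ⨆ μ : ℂ, u.eigenspace μ = ⊤ := by
    have h1 := Module.End.iSup_maxGenEigenspace_eq_top u
    have h2 : ∀ μ : ℂ, u.maxGenEigenspace μ = u.eigenspace μ :=
      fun μ => hss.isFinitelySemisimple.maxGenEigenspace_eq_eigenspace μ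
    simp_rw [h2] at h1; exact h1
  have hind := u.eigenspaces_iSupIndep
  have hint : DirectSum.IsInternal (fun μ : ℂ => u.eigenspace μ) :=
    (DirectSum.isInternal_submodule_iff_iSupIndep_and_iSup_eq_top _).mpr ⟨hind, hsup⟩
  have hfin : {μ : ℂ | u.eigenspace μ ≠ ⊥}.Finite :=
    WellFoundedGT.finite_ne_bot_of_iSupIndep hind
  have hmap : ∀ μ : ℂ, Set.MapsTo u (u.eigenspace μ) (u.eigenspace μ) := by
    intro μ x hx
    have := Module.End.mem_eigenspace_iff.mp hx
    exact Module.End.mem_eigenspace_iff.mpr (by rw [this, map_smul, this])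
  have hmapid : ∀ μ : ℂ, Set.MapsTo (LinearMap.id : V →ₗ[ℂ] V)
      (u.eigenspace μ) (u.eigenspace μ) := fun μ x hx => hx
  set s := hfin.toFinset with hs
  set n := finrank ℂ V with hndef
  have hres : ∀ μ : ℂ, LinearMap.trace ℂ (u.eigenspace μ) (u.restrict (hmap μ)) =
      μ * (finrank ℂ (u.eigenspace μ) : ℂ) := by
    intro μ
    have hrid : u.restrict (hmap μ) = μ • (LinearMap.id) := by
      ext x
      exact congrArg Subtype.val (Subtype.ext (by
        exact Module.End.mem_eigenspace_iff.mp x.2))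
    rw [hrid, map_smul, LinearMap.trace_id]
    simp [mul_comm]
  have htr : LinearMap.trace ℂ V u = ∑ μ ∈ s, μ * (finrank ℂ (u.eigenspace μ) : ℂ) := by
    rw [LinearMap.trace_eq_sum_trace_restrict' hint hfin hmap]
    exact Finset.sum_congr rfl fun μ _ => hres μ
  have htrid : (n : ℂ) = ∑ μ ∈ s, (finrank ℂ (u.eigenspace μ) : ℂ) := by
    have h1 := LinearMap.trace_eq_sum_trace_restrict' hint hfin hmapid
    rw [LinearMap.trace_id] at h1
    rw [hndef]
    rw [h1]
    refine Finset.sum_congr rfl fun μ _ => ?_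
    have : (LinearMap.id : V →ₗ[ℂ] V).restrict (hmapid μ) = LinearMap.id := rfl
    rw [this, LinearMap.trace_id]
  have habs1 : ∀ μ ∈ s, ‖μ‖ = 1 := by
    intro μ hμ
    rw [hs, Set.Finite.mem_toFinset] at hμ
    obtain ⟨x, hx0⟩ := Submodule.exists_mem_ne_zero_of_ne_bot hμ
    have hpk := pow_apply_eigen u hx0.1 k
    rw [huk] at hpk
    have : (μ ^ k - 1) • x = 0 := by
      rw [sub_smul, one_smul, ← hpk]; exact sub_eq_zero.mpr rfl
    have hμk : μ ^ k = 1 := by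
      rcases smul_eq_zero.mp this with h' | h'
      · exact sub_eq_zero.mp h'
      · exact absurd h' hx0.2
    simpa using Complex.norm_eq_one_of_pow_eq_one hμk hk0
  have hdpos : ∀ μ ∈ s, 0 < finrank ℂ (u.eigenspace μ) := by
    intro μ hμ
    rw [hs, Set.Finite.mem_toFinset] at hμ
    exact finrank_pos_iff.mpr (Submodule.nontrivial_iff_ne_bot.mpr hμ)
  set t := LinearMap.trace ℂ V u with ht
  have htn : ‖t‖ = (n : ℝ) := h
  have hnR : (0:ℝ) < (n:ℝ) := by exact_mod_cast hn
  have ht0 : t ≠ 0 := by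
    intro h0; rw [h0, norm_zero] at htn; exact hnR.ne htn
  have hct0 : (starRingEnd ℂ) t ≠ 0 := by simpa using ht0
  have hconj : (starRingEnd ℂ) t * t = ((n : ℝ) * n : ℝ) := by
    rw [mul_comm, Complex.mul_conj, ← Complex.sq_norm, htn]
    norm_num [pow_two]
  have hsum1 : ∑ μ ∈ s, ((finrank ℂ (u.eigenspace μ) : ℝ) * ((starRingEnd ℂ) t * μ).re)
      = (n:ℝ) * n := by
    have e1 : (starRingEnd ℂ) t * t = ∑ μ ∈ s, ((starRingEnd ℂ) t * μ * (finrank ℂ (u.eigenspace μ) : ℂ)) := by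
      nth_rewrite 2 [htr]
      rw [Finset.mul_sum]
      exact Finset.sum_congr rfl fun μ _ => by ring
    have e2 := congrArg Complex.re e1
    rw [hconj] at e2
    simp only [Complex.ofReal_re, Complex.re_sum] at e2
    rw [e2]
    refine Finset.sum_congr rfl fun μ _ => ?_
    rw [Complex.mul_re]
    simp [mul_comm]
  have hsum2 : ∑ μ ∈ s, ((finrank ℂ (u.eigenspace μ) : ℝ) * (n:ℝ)) = (n:ℝ) * n := by
    have e3 := congrArg Complex.re htrid
    simp only [Complex.natCast_re, Complex.re_sum] at e3
    rw [← Finset.sum_mul]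
    rw [← e3]
  have hle : ∀ μ ∈ s, (finrank ℂ (u.eigenspace μ) : ℝ) * ((starRingEnd ℂ) t * μ).re
      ≤ (finrank ℂ (u.eigenspace μ) : ℝ) * (n:ℝ) := by
    intro μ hμ
    refine mul_le_mul_of_nonneg_left ?_ (by positivity)
    calc ((starRingEnd ℂ) t * μ).re ≤ ‖(starRingEnd ℂ) t * μ‖ := Complex.re_le_norm _
      _ = (n:ℝ) := by rw [norm_mul, Complex.norm_conj, htn, habs1 μ hμ, mul_one]
  have heq := (Finset.sum_eq_sum_iff_of_le hle).mp (hsum1.trans hsum2.symm)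
  have hmu : ∀ μ ∈ s, μ * (n:ℂ) = t := by
    intro μ hμ
    have hre : ((starRingEnd ℂ) t * μ).re = (n:ℝ) := by
      have := heq μ hμ
      have hd : ((finrank ℂ (u.eigenspace μ)) : ℝ) ≠ 0 := by
        exact_mod_cast (hdpos μ hμ).ne'
      exact mul_left_cancel₀ hd this
    have habsm : ‖(starRingEnd ℂ) t * μ‖ = (n:ℝ) := by
      rw [norm_mul, Complex.norm_conj, htn, habs1 μ hμ, mul_one]
    have him : ((starRingEnd ℂ) t * μ).im = 0 := by
      have h2 := Complex.sq_norm ((starRingEnd ℂ) t * μ)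
      rw [habsm, Complex.normSq_apply, hre] at h2
      nlinarith [sq_nonneg (((starRingEnd ℂ) t * μ).im)]
    have hcm : (starRingEnd ℂ) t * μ = ((n:ℝ) : ℂ) := by
      exact Complex.ext (by simpa using hre) (by simpa using him)
    have : (starRingEnd ℂ) t * (μ * (n:ℂ)) = (starRingEnd ℂ) t * t := by
      rw [← mul_assoc, hcm, hconj]
      push_cast
      ring
    exact mul_left_cancel₀ hct0 this
  refine ⟨t / (n:ℂ), ?_, ?_⟩
  · rw [norm_div, htn, Complex.norm_natCast, div_self hnR.ne']
  · have hker : ∀ μ : ℂ, u.eigenspace μ ≤ LinearMap.ker (u - (t / (n:ℂ)) • LinearMap.id) := by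
      intro μ x hx
      by_cases hμ : μ ∈ s
      · rw [LinearMap.mem_ker, LinearMap.sub_apply, LinearMap.smul_apply, LinearMap.id_apply,
          Module.End.mem_eigenspace_iff.mp hx, sub_eq_zero]
        have hμt : μ = t / (n:ℂ) := by
          rw [eq_div_iff (by exact_mod_cast hnR.ne')]
          exact hmu μ hμ
        rw [hμt]
      · have : u.eigenspace μ = ⊥ := by
          by_contra hb
          exact hμ (by rw [hs, Set.Finite.mem_toFinset]; exact hb)
        rw [this, Submodule.mem_bot] at hx
        simp [hx]
    have hktop : LinearMap.ker (u - (t / (n:ℂ)) • LinearMap.id) = ⊤ :=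
      top_unique (hsup ▸ iSup_le hker)
    have := LinearMap.ker_eq_top.mp hktop
    rw [sub_eq_zero] at this
    exact this


lemma char_of_scalar (V : FDRep ℂ G) (z : G) (c : ℂ) (hc : V.ρ z = c • LinearMap.id) :
    V.character z = c * (finrank ℂ V : ℂ) := by
  show LinearMap.trace ℂ V (V.ρ z) = _
  rw [hc, map_smul, LinearMap.trace_id, smul_eq_mul]

lemma mem_iff_scalar (V : FDRep ℂ G) (hn : 0 < finrank ℂ V) (z : G) :
    z ∈ charCenter G (fun g => V.character g) ↔
      ∃ c : ℂ, ‖c‖ = 1 ∧ V.ρ z = c • LinearMap.id := by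
  have hone : ‖V.character 1‖ = (finrank ℂ V : ℝ) := by
    rw [FDRep.char_one]; exact Complex.norm_natCast _
  constructor
  · intro hz
    have hz' : ‖V.character z‖ = (finrank ℂ V : ℝ) := by
      have : ‖V.character z‖ = ‖V.character 1‖ := hz
      rw [this, hone]
    exact scalar_of_abs_char V z hn hz'
  · rintro ⟨c, hc1, hc⟩
    show ‖V.character z‖ = ‖V.character 1‖
    rw [char_of_scalar V z c hc, hone, norm_mul, hc1, one_mul, Complex.norm_natCast]

lemma rho_inv_scalar (V : FDRep ℂ G) (z : G) (c : ℂ) (hc0 : c ≠ 0)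
    (hc : V.ρ z = c • LinearMap.id) : V.ρ z⁻¹ = c⁻¹ • LinearMap.id := by
  have h1 : V.ρ z * V.ρ z⁻¹ = 1 := by rw [← map_mul, mul_inv_cancel, map_one]
  rw [hc, smul_mul_assoc, ← Module.End.one_eq_id, one_mul] at h1
  have h2 : V.ρ z⁻¹ = c⁻¹ • (1 : Module.End ℂ V) := by
    rw [← h1, smul_smul, inv_mul_cancel₀ hc0, one_smul]
  rw [h2, Module.End.one_eq_id]

/-- The "kernel" of the representation as a subgroup. -/
def rhoKer (V : FDRep ℂ G) : Subgroup G where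
  carrier := {x | V.ρ x = 1}
  one_mem' := map_one _
  mul_mem' := by
    intro a b ha hb
    show V.ρ (a * b) = 1
    rw [map_mul, ha, hb, one_mul]
  inv_mem' := by
    intro a ha
    show V.ρ a⁻¹ = 1
    have h1 : V.ρ a⁻¹ * V.ρ a = 1 := by rw [← map_mul, inv_mul_cancel, map_one]
    rw [ha, mul_one] at h1
    exact h1

instance (V : FDRep ℂ G) : (rhoKer V).Normal := by
  constructor
  intro x hx g
  show V.ρ (g * x * g⁻¹) = 1
  rw [map_mul, map_mul, hx, mul_one, ← map_mul, mul_inv_cancel, map_one]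

lemma commSub_le_rhoKer (V : FDRep ℂ G) (hn : 0 < finrank ℂ V) :
    commSub G (charCenter G (fun g => V.character g)) ≤ rhoKer V := by
  apply Subgroup.normalClosure_le_normal
  rintro x ⟨w, hw, g, rfl⟩
  obtain ⟨c, hc1, hc⟩ := (mem_iff_scalar V hn w).mp hw
  have hc0 : c ≠ 0 := by
    intro h0; rw [h0, norm_zero] at hc1; norm_num at hc1
  have hwinv := rho_inv_scalar V w c hc0 hc
  show V.ρ (w * g * w⁻¹ * g⁻¹) = 1
  rw [map_mul, map_mul, map_mul, hc, hwinv, ← Module.End.one_eq_id]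
  rw [smul_mul_assoc, one_mul, smul_mul_assoc, mul_smul_comm, smul_smul,
    mul_inv_cancel₀ hc0, one_smul, mul_one, ← map_mul, mul_inv_cancel, map_one]

lemma schur_scalar (V : FDRep ℂ G) [CategoryTheory.Simple V] (f : V →ₗ[ℂ] V)
    (hf : ∀ g : G, f ∘ₗ V.ρ g = V.ρ g ∘ₗ f) : ∃ c : ℂ, f = c • LinearMap.id := by
  let φ : V ⟶ V := ⟨InducedCategory.homMk (ModuleCat.ofHom f), fun g => FGModuleCat.hom_ext (hf g)⟩
  obtain ⟨c, hc⟩ := CategoryTheory.endomorphism_simple_eq_smul_id (𝕜 := ℂ) φ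
  have h2 : (c • 𝟙 V : V ⟶ V).hom = φ.hom := congrArg Action.Hom.hom hc
  exact ⟨c, (congrArg (fun k => k.hom.hom) h2).symm⟩

end Stmt1Aux

section
open CategoryTheory Stmt1Aux

theorem stmt1 (G : Type) [Group G] [Finite G] (χ : G → ℂ) (hχ : IsIrrChar G χ) :
    (Subgroup.center (G ⧸ commSub G (charCenter G χ)) :
        Set (G ⧸ commSub G (charCenter G χ))) =
      QuotientGroup.mk '' (charCenter G χ) := by
  classical
  obtain ⟨V, hsV, rfl⟩ := hχ
  haveI : CategoryTheory.Simple V := hsV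
  have hn : 0 < Module.finrank ℂ V := by
    by_contra hcon
    push_neg at hcon
    have h0 : Module.finrank ℂ V = 0 := Nat.le_zero.mp hcon
    have hss : Subsingleton V := Module.finrank_zero_iff.mp h0
    have hid : (𝟙 V : V ⟶ V) = 0 :=
      Action.hom_ext _ _ (FGModuleCat.hom_ext (LinearMap.ext fun v => @Subsingleton.elim _ hss _ _))
    exact CategoryTheory.id_nonzero V hid
  ext x
  constructor
  · intro hx
    obtain ⟨z, rfl⟩ := QuotientGroup.mk_surjective x
    refine ⟨z, ?_, rfl⟩
    have hcomm : ∀ g : G, V.ρ z ∘ₗ V.ρ g = V.ρ g ∘ₗ V.ρ z := by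
      intro g
      have h1 : (QuotientGroup.mk g : G ⧸ commSub G (charCenter G (fun g => V.character g))) *
          QuotientGroup.mk z = QuotientGroup.mk z * QuotientGroup.mk g :=
        Subgroup.mem_center_iff.mp hx _
      rw [← QuotientGroup.mk_mul, ← QuotientGroup.mk_mul] at h1
      have h2 := QuotientGroup.eq.mp h1
      have h4 : V.ρ ((g * z)⁻¹ * (z * g)) = 1 := commSub_le_rhoKer V hn h2
      have h5 : z * g = (g * z) * ((g * z)⁻¹ * (z * g)) := by group
      have h6 : V.ρ (z * g) = V.ρ (g * z) := by
        rw [h5, map_mul, h4, mul_one]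
      rw [map_mul, map_mul] at h6
      exact h6
    obtain ⟨c, hc⟩ := schur_scalar V (V.ρ z) hcomm
    haveI : Nontrivial V := Module.finrank_pos_iff.mp hn
    have hk0 : orderOf z ≠ 0 := (orderOf_pos z).ne'
    have hpow : V.ρ z ^ orderOf z = 1 := by rw [← map_pow, pow_orderOf_eq_one, map_one]
    rw [hc] at hpow
    rw [← Module.End.one_eq_id] at hpow
    have hpow2 : (c ^ orderOf z) • (1 : Module.End ℂ V) = 1 := by
      rw [smul_pow, one_pow] at hpow
      exact hpow
    obtain ⟨v, hv⟩ := exists_ne (0 : V)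
    have hck : c ^ orderOf z = 1 := by
      have h7 := congrArg (fun (f : Module.End ℂ V) => f v) hpow2
      simp only [LinearMap.smul_apply, Module.End.one_apply] at h7
      have h8 : (c ^ orderOf z - 1) • v = 0 := by
        rw [sub_smul, one_smul, h7, sub_self]
      rcases smul_eq_zero.mp h8 with h' | h'
      · exact sub_eq_zero.mp h'
      · exact absurd h' hv
    have hc1 : ‖c‖ = 1 := by
      have := Complex.norm_eq_one_of_pow_eq_one hck hk0
      simpa using this
    exact (mem_iff_scalar V hn z).mpr ⟨c, hc1, hc⟩
  · rintro ⟨z, hz, rfl⟩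
    rw [SetLike.mem_coe, Subgroup.mem_center_iff]
    intro q
    obtain ⟨g, rfl⟩ := QuotientGroup.mk_surjective q
    rw [← QuotientGroup.mk_mul, ← QuotientGroup.mk_mul]
    refine QuotientGroup.eq.mpr ?_
    obtain ⟨c, hc1, hcs⟩ := (mem_iff_scalar V hn z).mp hz
    have hc0 : c ≠ 0 := fun h0 => by simp [h0] at hc1
    have hzinv : z⁻¹ ∈ charCenter G (fun g => V.character g) :=
      (mem_iff_scalar V hn z⁻¹).mpr
        ⟨c⁻¹, by rw [norm_inv, hc1, inv_one], rho_inv_scalar V z c hc0 hcs⟩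
    apply Subgroup.subset_normalClosure
    refine ⟨z⁻¹, hzinv, g⁻¹, ?_⟩
    rw [commutatorElement_def]
    group

end
end
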